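/- Let a and b be positive integers with gcd(a,b) = 1. Then the number of (a,b)-Dyck paths is |D_{a,b}| = (1/(a+b))·binom(a+b, a). -/

import Mathlib

/-- The number of `(a,b)`-Dyck paths: lattice paths from `(0,a)` to `(b,0)` with unit
south and east steps staying weakly below the segment joining these points, encoded as
weakly increasing sequences `c_1 ≤ … ≤ c_{a-1}` of naturals with `c_l ≤ ⌊b*l/a⌋`. -/
noncomputable def dyckCount (a b : ℕ) : ℕ :=
  Nat.card {c : Fin (a - 1) → ℕ //
    Monotone c ∧ ∀ l : Fin (a - 1), c l ≤ b * (l.1 + 1) / a}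

namespace DyckProof

open Finset

/-- number of `i < t` with `i % n ∈ S` -/
def cnt (n : ℕ) (S : Finset ℕ) (t : ℕ) : ℕ :=
  ((range t).filter (fun i => i % n ∈ S)).card

lemma cnt_succ (n : ℕ) (S : Finset ℕ) (t : ℕ) :
    cnt n S (t + 1) = cnt n S t + (if t % n ∈ S then 1 else 0) := by
  unfold cnt
  rw [range_add_one, filter_insert]
  split
  · rw [card_insert_of_notMem (by simp)]
  · simp

lemma cnt_n {n : ℕ} {S : Finset ℕ} (hS : S ⊆ range n) : cnt n S n = S.card := by
  unfold cnt
  congr 1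
  ext i
  simp only [mem_filter, mem_range]
  constructor
  · rintro ⟨hi, hmem⟩
    rwa [Nat.mod_eq_of_lt hi] at hmem
  · intro hi
    have hilt : i < n := mem_range.1 (hS hi)
    exact ⟨hilt, by rwa [Nat.mod_eq_of_lt hilt]⟩

lemma cnt_add_n {n : ℕ} {S : Finset ℕ} (hS : S ⊆ range n) (t : ℕ) :
    cnt n S (t + n) = cnt n S t + S.card := by
  induction t with
  | zero => rw [Nat.zero_add, cnt_n hS]; simp [cnt]
  | succ t ih =>
      have h1 : t + 1 + n = (t + n) + 1 := by omega
      rw [h1, cnt_succ, ih, cnt_succ, Nat.add_mod_right]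
      ring

lemma cnt_period {n : ℕ} {S : Finset ℕ} (hS : S ⊆ range n) (t q : ℕ) :
    cnt n S (t + n * q) = cnt n S t + S.card * q := by
  induction q with
  | zero => simp
  | succ q ih =>
      have : t + n * (q + 1) = (t + n * q) + n := by ring
      rw [this, cnt_add_n hS, ih]; ring

/-- shift a subset of `range n` backwards by `s` (so position `i` in the new set
corresponds to position `i + s` in the old one). -/
def shf (n s : ℕ) (S : Finset ℕ) : Finset ℕ := S.image (fun x => (x + (n - s)) % n)

lemma shf_subset {n s : ℕ} (hn : 0 < n) (S : Finset ℕ) : shf n s S ⊆ range n := by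
  intro x hx
  simp only [shf, mem_image] at hx
  obtain ⟨y, _, rfl⟩ := hx
  exact mem_range.2 (Nat.mod_lt _ hn)

lemma mem_shf {n s : ℕ} {S : Finset ℕ} (hn : 0 < n) (hs : s ≤ n) (hS : S ⊆ range n)
    (i : ℕ) : i % n ∈ shf n s S ↔ (i + s) % n ∈ S := by
  have hns : n - s + s = n := Nat.sub_add_cancel hs
  constructor
  · rintro hmem
    simp only [shf, mem_image] at hmem
    obtain ⟨x, hx, hxe⟩ := hmem
    have hxlt : x < n := mem_range.1 (hS hx)
    have : (i + s) % n = x := by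
      have h1 : (i + s) % n = (i % n + s) % n := by
        conv_lhs => rw [← Nat.mod_add_mod]
      rw [h1, ← hxe, Nat.mod_add_mod, Nat.add_assoc, hns, Nat.add_mod_right,
        Nat.mod_eq_of_lt hxlt]
    rw [this]; exact hx
  · intro hmem
    simp only [shf, mem_image]
    refine ⟨(i + s) % n, hmem, ?_⟩
    rw [Nat.mod_add_mod, Nat.add_assoc]
    have h2 : s + (n - s) = n := by omega
    rw [h2, Nat.add_mod_right]

lemma shf_card {n s : ℕ} {S : Finset ℕ} (hn : 0 < n) (hs : s ≤ n) (hS : S ⊆ range n) :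
    (shf n s S).card = S.card := by
  unfold shf
  apply card_image_of_injOn
  intro x hx y hy hxy
  have hxlt : x < n := mem_range.1 (hS hx)
  have hylt : y < n := mem_range.1 (hS hy)
  have hxy' : (x + (n - s)) % n = (y + (n - s)) % n := hxy
  have key : ∀ z : ℕ, z < n → ((z + (n - s)) % n + s) % n = z := by
    intro z hz
    rw [Nat.mod_add_mod, Nat.add_assoc]
    have h2 : n - s + s = n := Nat.sub_add_cancel hs
    rw [h2, Nat.add_mod_right, Nat.mod_eq_of_lt hz]
  have := key x hxlt
  rw [hxy', key y hylt] at this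
  exact this.symm

lemma shf_ext {n : ℕ} {S T : Finset ℕ} (hS : S ⊆ range n) (hT : T ⊆ range n)
    (h : ∀ i, i % n ∈ S ↔ i % n ∈ T) : S = T := by
  ext x
  constructor
  · intro hx
    have hxlt : x < n := mem_range.1 (hS hx)
    have := (h x).1 (by rwa [Nat.mod_eq_of_lt hxlt])
    rwa [Nat.mod_eq_of_lt hxlt] at this
  · intro hx
    have hxlt : x < n := mem_range.1 (hT hx)
    have := (h x).2 (by rwa [Nat.mod_eq_of_lt hxlt])
    rwa [Nat.mod_eq_of_lt hxlt] at this

lemma shf_shf {n s s' : ℕ} {S : Finset ℕ} (hn : 0 < n) (hs : s ≤ n) (hs' : s' ≤ n)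
    (hS : S ⊆ range n) : shf n s (shf n s' S) = shf n ((s + s') % n) S := by
  apply shf_ext (shf_subset hn _) (shf_subset hn _)
  intro i
  rw [mem_shf hn hs (shf_subset hn S), mem_shf hn ((Nat.mod_lt _ hn).le) hS]
  rw [mem_shf hn hs' hS (i + s)]
  have key : (i + (s + s') % n) % n = (i + s + s') % n := by
    conv_lhs => rw [Nat.add_mod]
    rw [Nat.mod_mod_of_dvd _ dvd_rfl, ← Nat.add_mod, Nat.add_assoc]
  rw [key]

lemma shf_n {n : ℕ} {S : Finset ℕ} (hn : 0 < n) (hS : S ⊆ range n) : shf n n S = S := by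
  apply shf_ext (shf_subset hn _) hS
  intro i
  rw [mem_shf hn le_rfl hS, Nat.add_mod_right]

lemma shf_zero {n : ℕ} {S : Finset ℕ} (hn : 0 < n) (hS : S ⊆ range n) : shf n 0 S = S := by
  apply shf_ext (shf_subset hn _) hS
  intro i
  rw [mem_shf hn (Nat.zero_le n) hS, Nat.add_zero]

lemma cnt_shf {n s : ℕ} {S : Finset ℕ} (hn : 0 < n) (hs : s ≤ n) (hS : S ⊆ range n)
    (u : ℕ) : cnt n (shf n s S) u + cnt n S s = cnt n S (s + u) := by
  induction u with
  | zero => simp [cnt]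
  | succ u ih =>
      rw [cnt_succ]
      have hmm : s + (u + 1) = (s + u) + 1 := by omega
      rw [hmm, cnt_succ]
      have hiff := mem_shf hn hs hS u
      have heq : (if u % n ∈ shf n s S then 1 else 0) = (if (s + u) % n ∈ S then 1 else 0) := by
        rw [Nat.add_comm s u]; simp [hiff]
      omega

/-- the Dyck condition -/
def Dy (a n : ℕ) (S : Finset ℕ) : Prop := ∀ t ≤ n, a * t ≤ n * cnt n S t

/-- the signed prefix sum -/
def pf (a n : ℕ) (S : Finset ℕ) (t : ℕ) : ℤ := n * cnt n S t - a * t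

lemma dy_iff_pf {a n : ℕ} {S : Finset ℕ} : Dy a n S ↔ ∀ t ≤ n, 0 ≤ pf a n S t := by
  unfold Dy pf
  constructor <;> intro h t ht
  · have h2 : ((a * t : ℕ) : ℤ) ≤ ((n * cnt n S t : ℕ) : ℤ) := by exact_mod_cast h t ht
    push_cast at h2
    linarith
  · have h2 := h t ht
    have h3 : ((a * t : ℕ) : ℤ) ≤ ((n * cnt n S t : ℕ) : ℤ) := by push_cast; linarith
    exact_mod_cast h3

lemma pf_period {a n : ℕ} {S : Finset ℕ} (hS : S ⊆ range n) (hcard : S.card = a)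
    (t q : ℕ) : pf a n S (t + n * q) = pf a n S t := by
  unfold pf
  rw [cnt_period hS, hcard]
  push_cast; ring

lemma pf_inj {a n : ℕ} {S : Finset ℕ} (hcop : Nat.Coprime a n) {t t' : ℕ}
    (ht : t < n) (ht' : t' < n) (h : pf a n S t = pf a n S t') : t = t' := by
  unfold pf at h
  have hdvd : (n : ℤ) ∣ (a : ℤ) * ((t : ℤ) - t') := by
    refine ⟨(cnt n S t : ℤ) - cnt n S t', ?_⟩
    linarith [h]
  have hcop' : IsCoprime (n : ℤ) (a : ℤ) :=
    Int.isCoprime_iff_gcd_eq_one.mpr (by simpa [Nat.coprime_comm] using hcop)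
  have hdvd2 : (n : ℤ) ∣ ((t : ℤ) - t') := hcop'.dvd_of_dvd_mul_left hdvd
  have hz : ((t : ℤ) - t') = 0 := by
    apply Int.eq_zero_of_abs_lt_dvd hdvd2
    rw [abs_lt]
    constructor <;> push_cast <;> omega
  omega

lemma pf_mod {a n : ℕ} {S : Finset ℕ} (hS : S ⊆ range n)
    (hcard : S.card = a) (m : ℕ) : pf a n S m = pf a n S (m % n) := by
  conv_lhs => rw [← Nat.mod_add_div m n]
  exact pf_period hS hcard _ _

lemma pf_shf {a n s : ℕ} {S : Finset ℕ} (hn : 0 < n) (hs : s ≤ n) (hS : S ⊆ range n)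
    (u : ℕ) : pf a n (shf n s S) u = pf a n S (s + u) - pf a n S s := by
  unfold pf
  have h1 : (cnt n (shf n s S) u : ℤ) + cnt n S s = cnt n S (s + u) := by
    exact_mod_cast cnt_shf hn hs hS u
  have h3 : (n : ℤ) * (cnt n (shf n s S) u) + n * (cnt n S s) = n * (cnt n S (s + u)) := by
    rw [← mul_add, h1]
  push_cast
  linarith

/-- existence of a good shift -/
lemma exists_shift {a n : ℕ} (hn : 0 < n) {S : Finset ℕ} (hS : S ⊆ range n)
    (hcard : S.card = a) : ∃ s < n, Dy a n (shf n s S) := by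
  obtain ⟨s, hsmem, hmin⟩ := exists_min_image (range n) (pf a n S) ⟨0, mem_range.2 hn⟩
  have hslt : s < n := mem_range.1 hsmem
  refine ⟨s, hslt, ?_⟩
  rw [dy_iff_pf]
  intro u hu
  rw [pf_shf hn hslt.le hS]
  have h1 : pf a n S (s + u) = pf a n S ((s + u) % n) := pf_mod hS hcard _
  have h2 : pf a n S s ≤ pf a n S ((s + u) % n) :=
    hmin _ (mem_range.2 (Nat.mod_lt _ hn))
  linarith

/-- a good shift realizes the minimum -/
lemma shift_min {a n : ℕ} (hn : 0 < n) {S : Finset ℕ} (hS : S ⊆ range n)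
    (hcard : S.card = a) {s : ℕ} (hs : s < n) (hdy : Dy a n (shf n s S)) :
    ∀ t < n, pf a n S s ≤ pf a n S t := by
  intro t ht
  rw [dy_iff_pf] at hdy
  rcases le_or_gt s t with hst | hst
  · have hu : t - s ≤ n := by omega
    have h0 := hdy (t - s) hu
    rw [pf_shf hn hs.le hS] at h0
    have hsu : s + (t - s) = t := by omega
    rw [hsu] at h0; linarith
  · have hu : t + n - s ≤ n := by omega
    have h0 := hdy (t + n - s) hu
    rw [pf_shf hn hs.le hS] at h0
    have hsu : s + (t + n - s) = t + n := by omega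
    rw [hsu] at h0
    have hper : pf a n S (t + n) = pf a n S t := by
      simpa using pf_period hS hcard t 1
    linarith

lemma shift_unique {a n : ℕ} (hn : 0 < n) (hcop : Nat.Coprime a n) {S : Finset ℕ}
    (hS : S ⊆ range n) (hcard : S.card = a) {s s' : ℕ} (hs : s < n) (hs' : s' < n)
    (h1 : Dy a n (shf n s S)) (h2 : Dy a n (shf n s' S)) : s = s' := by
  have m1 := shift_min hn hS hcard hs h1 s' hs'
  have m2 := shift_min hn hS hcard hs' h2 s hs
  exact pf_inj hcop hs hs' (le_antisymm m1 m2)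

/-- the counting form of the cycle lemma -/
lemma card_mul_eq {a n : ℕ} (hn : 0 < n) (hcop : Nat.Coprime a n) :
    Nat.card {S : Finset ℕ // S ⊆ range n ∧ S.card = a ∧ Dy a n S} * n = n.choose a := by
  classical
  set Dsub := {S : Finset ℕ // S ⊆ range n ∧ S.card = a ∧ Dy a n S} with hD
  set Asub := {S : Finset ℕ // S ⊆ range n ∧ S.card = a} with hA
  have hΦ : ∀ (D : Dsub) (t : Fin n), shf n (n - t.1) D.1 ⊆ range n ∧
      (shf n (n - t.1) D.1).card = a := fun D t =>
    ⟨shf_subset hn _, by rw [shf_card hn (by omega) D.2.1]; exact D.2.2.1⟩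
  let Φ : Dsub × Fin n → Asub := fun p => ⟨shf n (n - p.2.1) p.1.1, hΦ p.1 p.2⟩
  have hbij : Function.Bijective Φ := by
    constructor
    · rintro ⟨⟨D, hDsub, hDcard, hDdy⟩, t⟩ ⟨⟨D', hDsub', hDcard', hDdy'⟩, t'⟩ heq
      have hSeq : shf n (n - t.1) D = shf n (n - t'.1) D' := congrArg Subtype.val heq
      set S := shf n (n - t.1) D with hSdef
      have hSsub : S ⊆ range n := shf_subset hn _
      have hScard : S.card = a := by rw [hSdef, shf_card hn (by omega) hDsub]; exact hDcard
      have hrec : shf n t.1 S = D := by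
        rw [hSdef, shf_shf hn t.2.le (by omega) hDsub]
        have he : (t.1 + (n - t.1)) % n = n % n := by congr 1; omega
        rw [he, Nat.mod_self]
        exact shf_zero hn hDsub
      have hrec' : shf n t'.1 S = D' := by
        rw [hSeq, shf_shf hn t'.2.le (by omega) hDsub']
        have he : (t'.1 + (n - t'.1)) % n = n % n := by congr 1; omega
        rw [he, Nat.mod_self]
        exact shf_zero hn hDsub'
      have htt : t.1 = t'.1 := by
        apply shift_unique hn hcop hSsub hScard t.2 t'.2
        · rw [hrec]; exact hDdy
        · rw [hrec']; exact hDdy'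
      have ht : t = t' := Fin.ext htt
      subst ht
      have hDD : D = D' := by rw [← hrec, ← hrec']
      subst hDD
      rfl
    · rintro ⟨S, hSsub, hScard⟩
      obtain ⟨s, hslt, hsdy⟩ := exists_shift hn hSsub hScard
      refine ⟨⟨⟨shf n s S, shf_subset hn _, by rw [shf_card hn hslt.le hSsub]; exact hScard, hsdy⟩,
        ⟨s, hslt⟩⟩, ?_⟩
      apply Subtype.ext
      show shf n (n - s) (shf n s S) = S
      rw [shf_shf hn (by omega) hslt.le hSsub]
      have he : (n - s + s) % n = n % n := by congr 1; omega
      rw [he, Nat.mod_self]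
      exact shf_zero hn hSsub
  have hcard1 : Nat.card (Dsub × Fin n) = Nat.card Asub := Nat.card_eq_of_bijective Φ hbij
  rw [Nat.card_prod, Nat.card_eq_of_equiv_fin (Equiv.refl (Fin n))] at hcard1
  have hcard2 : Nat.card Asub = n.choose a := by
    have e : Asub ≃ {S // S ∈ (range n).powersetCard a} :=
      Equiv.subtypeEquivRight (fun S => by rw [mem_powersetCard])
    rw [Nat.card_congr e, Nat.card_eq_finsetCard, card_powersetCard, card_range]
  rw [← hcard2, ← hcard1]

end DyckProof

namespace DyckProof

open Finset

/-- extend a `(a-1)`-sequence to the step positions -/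
def ext' (a : ℕ) (c : Fin (a - 1) → ℕ) : ℕ → ℕ
  | 0 => 0
  | l + 1 => (if h : l < a - 1 then c ⟨l, h⟩ else 0) + (l + 1)

section Seq

variable {a b : ℕ}

lemma ext'_succ_lt {c : Fin (a - 1) → ℕ} (hmono : Monotone c) :
    ∀ l, l + 1 < a → ext' a c l < ext' a c (l + 1) := by
  intro l hl
  match l with
  | 0 => simp [ext']
  | m + 1 =>
      have h1 : m < a - 1 := by omega
      simp only [ext']
      rcases Nat.lt_or_ge (m + 1) (a - 1) with hc | hc
      · rw [dif_pos h1, dif_pos hc]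
        have := hmono (a := ⟨m, h1⟩) (b := ⟨m + 1, hc⟩) (by simp [Fin.le_iff_val_le_val])
        omega
      · omega

lemma ext'_lt {c : Fin (a - 1) → ℕ} (hmono : Monotone c) :
    ∀ m l, l < m → m < a → ext' a c l < ext' a c m := by
  intro m
  induction m with
  | zero => omega
  | succ m ih =>
      intro l hl hm
      rcases Nat.lt_or_ge l m with hc | hc
      · exact lt_trans (ih l hc (by omega)) (ext'_succ_lt hmono m hm)
      · have : l = m := by omega
        subst this
        exact ext'_succ_lt hmono l hm

lemma ext'_bound (ha : 0 < a) {c : Fin (a - 1) → ℕ}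
    (hbd : ∀ l : Fin (a - 1), c l ≤ b * (l.1 + 1) / a) :
    ∀ l < a, a * ext' a c l ≤ (a + b) * l := by
  intro l hl
  match l with
  | 0 => simp [ext']
  | m + 1 =>
      have h1 : m < a - 1 := by omega
      simp only [ext', dif_pos h1]
      have h2 := (Nat.le_div_iff_mul_le ha).1 (hbd ⟨m, h1⟩)
      simp only at h2
      nlinarith [h2]

lemma ext'_lt_n (ha : 0 < a) {c : Fin (a - 1) → ℕ}
    (hbd : ∀ l : Fin (a - 1), c l ≤ b * (l.1 + 1) / a) :
    ∀ l < a, ext' a c l < a + b := by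
  intro l hl
  by_contra hge
  push_neg at hge
  have h1 := ext'_bound ha hbd l hl
  have h2 : a * (a + b) ≤ a * ext' a c l := Nat.mul_le_mul_left a hge
  have h3 : (a + b) * l ≤ (a + b) * (a - 1) := Nat.mul_le_mul_left _ (by omega)
  nlinarith [h1, h2, h3, Nat.sub_add_cancel ha]

lemma cnt_eq_filter {n t : ℕ} {S : Finset ℕ} (ht : t ≤ n) (hS : S ⊆ range n) :
    cnt n S t = (S.filter (· < t)).card := by
  unfold cnt
  congr 1
  ext i
  simp only [mem_filter, mem_range]
  constructor
  · rintro ⟨hi, hmem⟩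
    rw [Nat.mod_eq_of_lt (by omega)] at hmem
    exact ⟨hmem, hi⟩
  · rintro ⟨hmem, hi⟩
    exact ⟨hi, by rwa [Nat.mod_eq_of_lt (by omega)]⟩

lemma injOn_of_mono {a : ℕ} {f : ℕ → ℕ} (hmono : ∀ l m, l < m → m < a → f l < f m) :
    Set.InjOn f (range a) := by
  intro x hx y hy hxy
  simp only [coe_range, Set.mem_Iio] at hx hy
  rcases lt_trichotomy x y with hc | hc | hc
  · exact absurd hxy (Nat.ne_of_lt (hmono x y hc hy))
  · exact hc
  · exact absurd hxy.symm (Nat.ne_of_lt (hmono y x hc hx))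

lemma cnt_image {n a t : ℕ} {f : ℕ → ℕ} (hmono : ∀ l m, l < m → m < a → f l < f m)
    (hlt : ∀ l < a, f l < n) (ht : t ≤ n) :
    cnt n ((range a).image f) t = ((range a).filter (fun l => f l < t)).card := by
  have hsub : (range a).image f ⊆ range n := by
    intro x hx
    simp only [mem_image] at hx
    obtain ⟨l, hl, rfl⟩ := hx
    exact mem_range.2 (hlt l (mem_range.1 hl))
  rw [cnt_eq_filter ht hsub, filter_image]
  exact card_image_of_injOn ((injOn_of_mono hmono).mono
    (by exact_mod_cast coe_subset.2 (filter_subset _ _)))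

lemma dy_iff {n : ℕ} (ha : 0 < a) (han : a ≤ n) {f : ℕ → ℕ}
    (hmono : ∀ l m, l < m → m < a → f l < f m) (hlt : ∀ l < a, f l < n) :
    Dy a n ((range a).image f) ↔ ∀ l < a, a * f l ≤ n * l := by
  constructor
  · intro hdy l hl
    have hfl : f l ≤ n := (hlt l hl).le
    have hcnt : cnt n ((range a).image f) (f l) = l := by
      rw [cnt_image hmono hlt hfl]
      have : (range a).filter (fun m => f m < f l) = range l := by
        ext m
        simp only [mem_filter, mem_range]
        constructor
        · rintro ⟨hma, hmf⟩
          by_contra hge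
          push_neg at hge
          rcases Nat.lt_or_ge l m with hc | hc
          · exact absurd hmf (by have := hmono l m hc hma; omega)
          · have : l = m := by omega
            subst this; omega
        · intro hml
          exact ⟨by omega, hmono m l hml hl⟩
      rw [this, card_range]
    have := hdy (f l) hfl
    rwa [hcnt] at this
  · intro hbnd t ht
    rw [cnt_image hmono hlt ht]
    set k := ((range a).filter (fun l => f l < t)).card with hk
    have hka : k ≤ a := by
      calc k ≤ (range a).card := card_le_card (filter_subset _ _)
        _ = a := card_range a
    rcases Nat.lt_or_ge k a with hc | hc
    · have htk : t ≤ f k := by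
        by_contra hge
        push_neg at hge
        have hsub2 : range (k + 1) ⊆ (range a).filter (fun l => f l < t) := by
          intro m hm
          have hmk : m ≤ k := by have := mem_range.1 hm; omega
          refine mem_filter.2 ⟨mem_range.2 (by omega), ?_⟩
          rcases Nat.lt_or_ge m k with hc2 | hc2
          · exact lt_trans (hmono m k hc2 hc) hge
          · have : m = k := by omega
            subst this; exact hge
        have := card_le_card hsub2
        rw [card_range, ← hk] at this
        omega
      calc a * t ≤ a * f k := Nat.mul_le_mul_left a htk
        _ ≤ n * k := hbnd k hc
    · have hka2 : k = a := by omega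
      rw [hka2]
      calc a * t ≤ a * n := Nat.mul_le_mul_left a ht
        _ = n * a := Nat.mul_comm a n

lemma seq_card (ha : 0 < a) (hb : 0 < b) :
    Nat.card {c : Fin (a - 1) → ℕ //
        Monotone c ∧ ∀ l : Fin (a - 1), c l ≤ b * (l.1 + 1) / a} =
    Nat.card {S : Finset ℕ // S ⊆ range (a + b) ∧ S.card = a ∧ Dy a (a + b) S} := by
  classical
  set n := a + b with hn
  have hna : a ≤ n := by omega
  have hprops : ∀ (c : Fin (a - 1) → ℕ), Monotone c →
      (∀ l : Fin (a - 1), c l ≤ b * (l.1 + 1) / a) →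
      ((range a).image (ext' a c) ⊆ range n ∧ ((range a).image (ext' a c)).card = a ∧
        Dy a n ((range a).image (ext' a c))) := by
    intro c hmono hbd
    have hmono' : ∀ l m, l < m → m < a → ext' a c l < ext' a c m :=
      fun l m h1 h2 => ext'_lt hmono m l h1 h2
    have hlt : ∀ l < a, ext' a c l < n := ext'_lt_n ha hbd
    refine ⟨?_, ?_, ?_⟩
    · intro x hx
      simp only [mem_image] at hx
      obtain ⟨l, hl, rfl⟩ := hx
      exact mem_range.2 (hlt l (mem_range.1 hl))
    · rw [card_image_of_injOn (injOn_of_mono hmono'), card_range]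
    · exact (dy_iff ha hna hmono' hlt).2 (ext'_bound ha hbd)
  let Φ : {c : Fin (a - 1) → ℕ //
        Monotone c ∧ ∀ l : Fin (a - 1), c l ≤ b * (l.1 + 1) / a} →
      {S : Finset ℕ // S ⊆ range n ∧ S.card = a ∧ Dy a n S} :=
    fun p => ⟨(range a).image (ext' a p.1), hprops p.1 p.2.1 p.2.2⟩
  apply Nat.card_eq_of_bijective Φ
  constructor
  · rintro ⟨c, hmono, hbd⟩ ⟨c', hmono', hbd'⟩ heq
    have hSeq : (range a).image (ext' a c) = (range a).image (ext' a c') :=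
      congrArg Subtype.val heq
    set S := (range a).image (ext' a c) with hSdef
    have hScard : S.card = a := (hprops c hmono hbd).2.1
    have hF : ∀ (cc : Fin (a - 1) → ℕ), Monotone cc →
        (∀ l : Fin (a - 1), cc l ≤ b * (l.1 + 1) / a) →
        ((range a).image (ext' a cc) = S) →
        (fun i : Fin a => ext' a cc i.1) = ⇑(S.orderEmbOfFin hScard) := by
      intro cc hm hbdd hSe
      apply orderEmbOfFin_unique hScard
      · intro i
        rw [← hSe]
        exact mem_image.2 ⟨i.1, mem_range.2 i.2, rfl⟩
      · intro i j hij
        exact ext'_lt hm j.1 i.1 (Fin.lt_iff_val_lt_val.1 hij) j.2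
    have h1 := hF c hmono hbd rfl
    have h2 := hF c' hmono' hbd' hSeq.symm
    have hee : (fun i : Fin a => ext' a c i.1) = (fun i : Fin a => ext' a c' i.1) := by
      rw [h1, h2]
    apply Subtype.ext
    funext l
    have hla : l.1 + 1 < a := by omega
    have := congrFun hee ⟨l.1 + 1, hla⟩
    simp only [ext'] at this
    rw [dif_pos l.2, dif_pos l.2] at this
    simp only [Fin.eta] at this
    show c l = c' l
    omega
  · rintro ⟨S, hSsub, hScard, hSdy⟩
    set g := S.orderEmbOfFin hScard with hg
    set f : ℕ → ℕ := fun m => if h : m < a then g ⟨m, h⟩ else 0 with hf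
    have hgm : ∀ l m, l < m → m < a → f l < f m := by
      intro l m h1 h2
      rw [hf]
      simp only
      rw [dif_pos (by omega : l < a), dif_pos h2]
      exact g.strictMono (by exact Fin.mk_lt_mk.2 h1)
    have hlt : ∀ m < a, f m < n := by
      intro m hm
      rw [hf]; simp only; rw [dif_pos hm]
      exact mem_range.1 (hSsub (S.orderEmbOfFin_mem hScard ⟨m, hm⟩))
    have hSeq : S = (range a).image f := by
      apply Eq.symm
      apply eq_of_subset_of_card_le
      · intro x hx
        simp only [mem_image] at hx
        obtain ⟨m, hm, rfl⟩ := hx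
        have hma : m < a := mem_range.1 hm
        rw [hf]; simp only; rw [dif_pos hma]
        exact S.orderEmbOfFin_mem hScard ⟨m, hma⟩
      · rw [card_image_of_injOn (injOn_of_mono hgm), card_range, hScard]
    have hbnd : ∀ l < a, a * f l ≤ n * l := by
      apply (dy_iff ha hna hgm hlt).1
      rw [← hSeq]; exact hSdy
    have hf0 : f 0 = 0 := by
      have h0 : a * f 0 = 0 := Nat.le_zero.1 (by simpa using hbnd 0 ha)
      rcases Nat.mul_eq_zero.1 h0 with h | h
      · omega
      · exact h
    have hgap : ∀ d l, l + d < a → f l + d ≤ f (l + d) := by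
      intro d
      induction d with
      | zero => intro l _; simp
      | succ d ih =>
          intro l hl
          have h1 := ih l (by omega)
          have h2 := hgm (l + d) (l + d + 1) (by omega) (by omega)
          have he : l + (d + 1) = l + d + 1 := by omega
          rw [he]
          omega
    have hge : ∀ m, m < a → m ≤ f m := by
      intro m hm
      have := hgap m 0 (by omega)
      simp only [Nat.zero_add] at this
      omega
    set c : Fin (a - 1) → ℕ := fun l => f (l.1 + 1) - (l.1 + 1) with hc
    have hcmono : Monotone c := by
      intro l m hlm
      have hlv : l.1 ≤ m.1 := hlm
      have hma : m.1 + 1 < a := by omega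
      have h1 := hgap (m.1 - l.1) (l.1 + 1) (by omega)
      have he : l.1 + 1 + (m.1 - l.1) = m.1 + 1 := by omega
      rw [he] at h1
      have h2 := hge (l.1 + 1) (by omega)
      simp only [hc]
      omega
    have hcbd : ∀ l : Fin (a - 1), c l ≤ b * (l.1 + 1) / a := by
      intro l
      rw [Nat.le_div_iff_mul_le ha]
      have hla : l.1 + 1 < a := by omega
      have h1 := hbnd (l.1 + 1) hla
      have h2 := hge (l.1 + 1) hla
      simp only [hc]
      have e1 : (f (l.1 + 1) - (l.1 + 1)) * a = f (l.1 + 1) * a - (l.1 + 1) * a :=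
        Nat.sub_mul _ _ _
      have e2 : a * f (l.1 + 1) = f (l.1 + 1) * a := Nat.mul_comm _ _
      have e3 : n * (l.1 + 1) = a * (l.1 + 1) + b * (l.1 + 1) := by rw [hn]; ring
      have e4 : a * (l.1 + 1) = (l.1 + 1) * a := Nat.mul_comm _ _
      omega
    have hext : ∀ m, m < a → ext' a c m = f m := by
      intro m hm
      match m with
      | 0 => simp [ext', hf0]
      | mm + 1 =>
          have h1 : mm < a - 1 := by omega
          simp only [ext', dif_pos h1]
          have h2 := hge (mm + 1) hm
          simp only [hc]
          omega
    refine ⟨⟨c, hcmono, hcbd⟩, ?_⟩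
    apply Subtype.ext
    show (range a).image (ext' a c) = S
    rw [hSeq]
    apply image_congr
    intro m hm
    exact hext m (by simpa using hm)

end Seq

end DyckProof

theorem dyck_coprime (a b : ℕ) (ha : 0 < a) (hb : 0 < b) (h : Nat.gcd a b = 1) :
    (dyckCount a b : ℚ) = ((a + b).choose a : ℚ) / (a + b) := by
  have hn : 0 < a + b := by omega
  have hcop : Nat.Coprime a (a + b) := by
    rw [Nat.add_comm]
    exact Nat.coprime_add_self_right.2 h
  have key : dyckCount a b * (a + b) = (a + b).choose a := by
    rw [dyckCount, DyckProof.seq_card ha hb]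
    exact DyckProof.card_mul_eq hn hcop
  have hpos : (0 : ℚ) < (a : ℚ) + b := by
    have : (0 : ℚ) < ((a + b : ℕ) : ℚ) := by exact_mod_cast hn
    push_cast at this
    linarith
  rw [eq_div_iff hpos.ne']
  exact_mod_cast key
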